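/- There exists a constant C > 0 such that for all integers r, α, β with 1 ≤ β ≤ α/2 and 2β ≤ α ≤ r, the number of elements of 𝒢_{α,β,r} satisfies |𝒢_{α,β,r}| ≤ 2^{C·r} · Δ(α,β), where Δ(α,β) = α^{2α} · β^{−β} · [ (α−2β)² + 4(α−β) ]^{r−α}. -/

import Mathlib

open scoped BigOperators Classical
noncomputable section

namespace FHGraph

def edgeGraph (α r : ℕ) (f : Fin r → Sym2 (Fin α)) : SimpleGraph (Fin α) where
  Adj v w := v ≠ w ∧ ∃ p, f p = s(v, w)
  symm := by
    constructor
    rintro v w ⟨hvw, p, hp⟩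
    exact ⟨hvw.symm, p, by rw [hp, Sym2.eq_swap]⟩
  loopless := by constructor; rintro v ⟨h, -⟩; exact h rfl

def edgeDeg (α r : ℕ) (f : Fin r → Sym2 (Fin α)) (v : Fin α) : ℕ :=
  (Finset.univ.filter (fun p : Fin r => v ∈ f p)).card

def numCC (α r : ℕ) (f : Fin r → Sym2 (Fin α)) : ℕ :=
  Nat.card (edgeGraph α r f).ConnectedComponent

def Gfam (α β r : ℕ) : Set (Fin r → Sym2 (Fin α)) :=
  {f | (∀ p, ¬ (f p).IsDiag) ∧ (∀ v, ∃ p, v ∈ f p) ∧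
    (∀ v, Even (edgeDeg α r f v)) ∧ numCC α r f = β}

def Delta (α β r : ℕ) : ℝ :=
  (α:ℝ)^(2*α) / (β:ℝ)^β * (((α:ℝ) - 2*β)^2 + 4*((α:ℝ) - β))^(r - α)

open Finset

-- ===================== auxiliary definitions =====================

/-- the connected component of `v` as a `Finset`. -/
def blockOf (α r : ℕ) (f : Fin r → Sym2 (Fin α)) (v : Fin α) : Finset (Fin α) :=
  Finset.univ.filter (fun w => (edgeGraph α r f).Reachable v w)

/-- the set of connected components (as finsets of vertices). -/
def blocksOf (α r : ℕ) (f : Fin r → Sym2 (Fin α)) : Finset (Finset (Fin α)) :=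
  Finset.univ.image (blockOf α r f)

/-- labels whose edge lies inside `b`. -/
def labelsIn (α r : ℕ) (f : Fin r → Sym2 (Fin α)) (b : Finset (Fin α)) : Finset (Fin r) :=
  Finset.univ.filter (fun p => ∀ v ∈ f p, v ∈ b)

/-- all `Sym2` pairs with both endpoints in `b`. -/
def pairsIn (α : ℕ) (b : Finset (Fin α)) : Finset (Sym2 (Fin α)) :=
  (b ×ˢ b).image (fun q => s(q.1, q.2))

/-- `F` is a partition of `s` into `β` blocks, each of size at least 2. -/
def IsPart (α β : ℕ) (s : Finset (Fin α)) (F : Finset (Finset (Fin α))) : Prop :=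
  F.card = β ∧ (∀ b ∈ F, b ⊆ s ∧ 2 ≤ b.card) ∧ (∀ v ∈ s, ∃ b ∈ F, v ∈ b) ∧
    (∀ b ∈ F, ∀ b' ∈ F, b ≠ b' → Disjoint b b')

def partFinset (α β : ℕ) (s : Finset (Fin α)) : Finset (Finset (Finset (Fin α))) :=
  Finset.univ.filter (IsPart α β s)


lemma pow_self_le_exp_mul_factorial (k : ℕ) :
    (k:ℝ)^k ≤ (Real.exp 1)^k * k.factorial := by
  induction k with
  | zero => simp
  | succ n ih =>
    have hstep : ((n:ℝ)+1)^n ≤ Real.exp 1 * (n:ℝ)^n := by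
      rcases Nat.eq_zero_or_pos n with h | h
      · subst h; simpa using Real.one_le_exp (by norm_num : (0:ℝ) ≤ 1)
      · have hn : (0:ℝ) < n := by exact_mod_cast h
        have h1 : (1:ℝ) + 1/n ≤ Real.exp (1/n) := by
          have := Real.add_one_le_exp (1/(n:ℝ)); linarith
        have h2 : ((1:ℝ) + 1/n)^n ≤ (Real.exp (1/n))^n :=
          pow_le_pow_left₀ (by positivity) h1 n
        have h3 : (Real.exp (1/(n:ℝ)))^n = Real.exp 1 := by
          rw [← Real.exp_nat_mul]; congr 1; field_simp
        have h4 : ((n:ℝ)+1)^n = ((1:ℝ) + 1/n)^n * (n:ℝ)^n := by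
          rw [← mul_pow]; congr 1; field_simp
        rw [h4, ← h3]
        exact mul_le_mul_of_nonneg_right h2 (by positivity)
    have hnn : (0:ℝ) ≤ (n:ℝ) + 1 := by positivity
    have c1 : ((n+1:ℕ):ℝ)^(n+1) = ((n:ℝ)+1) * ((n:ℝ)+1)^n := by push_cast; ring
    have c2 : ((n:ℝ)+1) * ((n:ℝ)+1)^n ≤ ((n:ℝ)+1) * (Real.exp 1 * (n:ℝ)^n) :=
      mul_le_mul_of_nonneg_left hstep hnn
    have c3 : ((n:ℝ)+1) * (Real.exp 1 * (n:ℝ)^n)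
        ≤ ((n:ℝ)+1) * (Real.exp 1 * ((Real.exp 1)^n * n.factorial)) := by
      apply mul_le_mul_of_nonneg_left _ hnn
      exact mul_le_mul_of_nonneg_left ih (Real.exp_pos 1).le
    have c4 : ((n:ℝ)+1) * (Real.exp 1 * ((Real.exp 1)^n * n.factorial))
        = (Real.exp 1)^(n+1) * ((n+1:ℕ).factorial) := by
      rw [Nat.factorial_succ]; push_cast; ring
    rw [c1]
    exact le_trans c2 (le_trans c3 (le_of_eq c4))

lemma exp_one_le_four : Real.exp 1 ≤ 4 := by
  have := Real.exp_one_lt_d9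
  norm_num at this ⊢
  linarith

lemma pow_self_le_four_pow_mul_factorial (k : ℕ) :
    (k:ℝ)^k ≤ 4^k * k.factorial := by
  calc (k:ℝ)^k ≤ (Real.exp 1)^k * k.factorial := pow_self_le_exp_mul_factorial k
    _ ≤ 4^k * k.factorial := by
        apply mul_le_mul_of_nonneg_right _ (by positivity)
        exact pow_le_pow_left₀ (Real.exp_pos 1).le exp_one_le_four k

lemma geom_aux (σ : ℕ) :
    ∑ j ∈ range σ, ((j+1:ℕ):ℝ)^(j+1) / (j.factorial * 32^(j+1)) ≤ 2 := by
  have hterm : ∀ j : ℕ, ((j+1:ℕ):ℝ)^(j+1) / (j.factorial * 32^(j+1)) ≤ (1/4)^(j+1) := by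
    intro j
    have h1 : ((j+1:ℕ):ℝ)^(j+1) ≤ 4^(j+1) * (j+1).factorial :=
      pow_self_le_four_pow_mul_factorial (j+1)
    have h2 : ((j+1:ℕ):ℝ) ≤ 2^(j+1) := by
      exact_mod_cast (Nat.lt_two_pow_self (n := j+1)).le
    have hfac : ((j+1).factorial : ℝ) = ((j+1:ℕ):ℝ) * j.factorial := by
      rw [Nat.factorial_succ]; push_cast; ring
    have hpos : (0:ℝ) < (j.factorial : ℝ) * 32^(j+1) := by positivity
    rw [div_le_iff₀ hpos]
    have h32 : (32:ℝ)^(j+1) = 4^(j+1) * 8^(j+1) := by rw [← mul_pow]; norm_num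
    have h8 : (4:ℝ)^(j+1) * 2^(j+1) = 8^(j+1) := by rw [← mul_pow]; norm_num
    calc ((j+1:ℕ):ℝ)^(j+1) ≤ 4^(j+1) * (j+1).factorial := h1
      _ = 4^(j+1) * ((j+1:ℕ):ℝ) * j.factorial := by rw [hfac]; ring
      _ ≤ 4^(j+1) * 2^(j+1) * j.factorial := by
          apply mul_le_mul_of_nonneg_right _ (by positivity)
          exact mul_le_mul_of_nonneg_left h2 (by positivity)
      _ = (1/4)^(j+1) * ((j.factorial : ℝ) * 32^(j+1)) := by
          rw [h8, h32, div_pow, one_pow]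
          field_simp
  calc ∑ j ∈ range σ, ((j+1:ℕ):ℝ)^(j+1) / (j.factorial * 32^(j+1))
      ≤ ∑ j ∈ range σ, ((1:ℝ)/4)^(j+1) := sum_le_sum (fun j _ => hterm j)
    _ = (1/4) * ∑ j ∈ range σ, ((1:ℝ)/4)^j := by
        rw [mul_sum]; apply sum_congr rfl; intro j _; rw [pow_succ]; ring
    _ ≤ (1/4) * (4/3) := by
        apply mul_le_mul_of_nonneg_left _ (by norm_num)
        have h := geom_sum_eq (by norm_num : ((1:ℝ)/4) ≠ 1) σ
        rw [h]
        have hp : (0:ℝ) ≤ (1/4:ℝ)^σ := by positivity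
        have : ((1/4:ℝ)^σ - 1)/((1/4:ℝ) - 1) = (1 - (1/4:ℝ)^σ)/(3/4) := by ring
        rw [this]
        rw [div_le_iff₀ (by norm_num : (0:ℝ) < 3/4)]
        linarith
    _ ≤ 2 := by norm_num

end FHGraph

namespace FHGraph
open Finset

/-- the central arithmetic estimate for the master induction -/
lemma arith_step (σ β : ℕ) (hσ : 2*(β+1) ≤ σ) :
    ∑ j ∈ range σ, ((σ-1).choose j : ℝ) * (((j+1:ℕ):ℝ)^(j+1) *
        (32^(σ-(j+1)) * (σ-(j+1)).factorial / β.factorial))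
      ≤ 32^σ * σ.factorial / (β+1).factorial := by
  have hσ1 : 1 ≤ σ := by omega
  have hβfac : (0:ℝ) < β.factorial := by exact_mod_cast β.factorial_pos
  -- rewrite each term
  have hterm : ∀ j ∈ range σ, ((σ-1).choose j : ℝ) * (((j+1:ℕ):ℝ)^(j+1) *
        (32^(σ-(j+1)) * (σ-(j+1)).factorial / β.factorial))
      = ((σ-1).factorial * 32^σ / β.factorial) *
          (((j+1:ℕ):ℝ)^(j+1) / (j.factorial * 32^(j+1))) := by
    intro j hj
    have hjσ : j ≤ σ - 1 := by simp [mem_range] at hj; omega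
    have hch : ((σ-1).choose j : ℝ) * j.factorial * (σ-1-j).factorial = (σ-1).factorial := by
      exact_mod_cast congrArg (Nat.cast : ℕ → ℝ) (Nat.choose_mul_factorial_mul_factorial hjσ)
    have hsub : σ - (j+1) = σ - 1 - j := by omega
    have hpow : (32:ℝ)^(σ-(j+1)) * 32^(j+1) = 32^σ := by
      rw [← pow_add]; congr 1; omega
    have hjf : (0:ℝ) < j.factorial := by exact_mod_cast j.factorial_pos
    have h32 : (0:ℝ) < (32:ℝ)^(j+1) := by positivity
    rw [hsub] at *
    field_simp
    rw [← hch]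
    ring_nf
    rw [← hpow]
    ring
  rw [sum_congr rfl hterm, ← mul_sum]
  have hsum := geom_aux σ
  have hK : (0:ℝ) ≤ (σ-1).factorial * 32^σ / β.factorial := by positivity
  calc ((σ-1).factorial * 32^σ / β.factorial) *
        ∑ j ∈ range σ, (((j+1:ℕ):ℝ)^(j+1) / (j.factorial * 32^(j+1)))
      ≤ ((σ-1).factorial * 32^σ / β.factorial) * 2 := mul_le_mul_of_nonneg_left hsum hK
    _ ≤ 32^σ * σ.factorial / (β+1).factorial := by
        have hfs : (σ.factorial : ℝ) = σ * (σ-1).factorial := by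
          exact_mod_cast congrArg (Nat.cast : ℕ → ℝ) (Nat.mul_factorial_pred (n := σ) (by omega)).symm
        have hfb : ((β+1).factorial : ℝ) = (β+1) * β.factorial := by
          rw [Nat.factorial_succ]; push_cast; ring
        rw [hfs, hfb]
        have hb1 : (0:ℝ) < (β:ℝ)+1 := by positivity
        have h2σ : 2*((β:ℝ)+1) ≤ σ := by exact_mod_cast hσ
        rw [div_mul_eq_mul_div, div_le_div_iff₀ (by positivity) (by positivity)]
        have hpos : (0:ℝ) ≤ (σ-1).factorial * 32^σ := by positivity
        nlinarith [hpos, mul_le_mul_of_nonneg_left h2σ hpos]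
  

lemma mem_partFinset {α β : ℕ} {s : Finset (Fin α)} {F : Finset (Finset (Fin α))} :
    F ∈ partFinset α β s ↔ IsPart α β s F := by
  simp [partFinset]

set_option maxHeartbeats 1000000 in
/-- The master bound on the weighted sum over partitions. -/
lemma master (α : ℕ) (β : ℕ) : ∀ s : Finset (Fin α),
    ∑ F ∈ partFinset α β s, ∏ b ∈ F, ((b.card : ℝ))^b.card
      ≤ 32^s.card * (s.card).factorial / β.factorial := by
  induction β with
  | zero =>
    intro s
    have hsub : partFinset α 0 s ⊆ {∅} := by
      intro F hF
      rw [mem_partFinset] at hF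
      rw [mem_singleton, ← Finset.card_eq_zero]
      exact hF.1
    calc ∑ F ∈ partFinset α 0 s, ∏ b ∈ F, ((b.card : ℝ))^b.card
        ≤ ∑ F ∈ ({∅} : Finset (Finset (Finset (Fin α)))), ∏ b ∈ F, ((b.card : ℝ))^b.card := by
          apply sum_le_sum_of_subset_of_nonneg hsub
          intro F _ _
          exact prod_nonneg (fun b _ => by positivity)
      _ = 1 := by simp
      _ ≤ 32^s.card * (s.card).factorial / Nat.factorial 0 := by
          rw [Nat.factorial_zero]
          push_cast
          rw [div_one]
          have h1 : (1:ℝ) ≤ 32^s.card := by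
            have : ((1:ℝ))^s.card ≤ 32^s.card :=
              pow_le_pow_left₀ (by norm_num) (by norm_num) _
            simpa using this
          have h2 : (1:ℝ) ≤ (s.card).factorial := by exact_mod_cast (s.card).factorial_pos
          nlinarith
  | succ β ih =>
    intro s
    by_cases hne : (partFinset α (β+1) s).Nonempty
    swap
    · rw [not_nonempty_iff_eq_empty] at hne
      rw [hne, sum_empty]
      positivity
    obtain ⟨F₀, hF₀mem⟩ := hne
    have hF₀ : IsPart α (β+1) s F₀ := mem_partFinset.mp hF₀mem
    have h2β : 2*(β+1) ≤ s.card := by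
      have hdisj : ∀ x ∈ F₀, ∀ y ∈ F₀, x ≠ y → Disjoint (id x) (id y) := by
        intro x hx y hy hxy; exact hF₀.2.2.2 x hx y hy hxy
      have hbu : F₀.biUnion id ⊆ s := by
        intro x hx
        rw [mem_biUnion] at hx
        obtain ⟨b, hb, hxb⟩ := hx
        exact (hF₀.2.1 b hb).1 hxb
      have hcard : (F₀.biUnion id).card = ∑ b ∈ F₀, b.card := Finset.card_biUnion hdisj
      have hsum : 2*(β+1) ≤ ∑ b ∈ F₀, b.card := by
        calc 2*(β+1) = ∑ _b ∈ F₀, 2 := by rw [sum_const, hF₀.1]; ring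
          _ ≤ ∑ b ∈ F₀, b.card := sum_le_sum (fun b hb => (hF₀.2.1 b hb).2)
      calc 2*(β+1) ≤ ∑ b ∈ F₀, b.card := hsum
        _ = (F₀.biUnion id).card := hcard.symm
        _ ≤ s.card := Finset.card_le_card hbu
    have hs : s.Nonempty := by
      rw [← Finset.card_pos]; omega
    set σ := s.card with hσdef
    have hσ1 : 1 ≤ σ := by omega
    set v₀ := s.min' hs with hv₀def
    have hv₀s : v₀ ∈ s := s.min'_mem hs
    set B0 : Finset (Finset (Fin α)) → Finset (Fin α) :=
      fun F => if h : ∃ b ∈ F, v₀ ∈ b then h.choose else ∅ with hB0def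
    have hB0 : ∀ F, (∃ b ∈ F, v₀ ∈ b) → B0 F ∈ F ∧ v₀ ∈ B0 F := by
      intro F h
      rw [hB0def]
      simp only [dif_pos h]
      exact ⟨h.choose_spec.1, h.choose_spec.2⟩
    have hB0part : ∀ F, IsPart α (β+1) s F → B0 F ∈ F ∧ v₀ ∈ B0 F :=
      fun F hF => hB0 F (hF.2.2.1 v₀ hv₀s)
    have hmaps : ∀ F ∈ partFinset α (β+1) s, B0 F ∈ s.powerset := by
      intro F hF
      rw [mem_partFinset] at hF
      rw [mem_powerset]
      exact (hF.2.1 _ (hB0part F hF).1).1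
    set w : Finset (Finset (Fin α)) → ℝ := fun F => ∏ b ∈ F, ((b.card : ℝ))^b.card with hwdef
    have hwnn : ∀ F, 0 ≤ w F := fun F => prod_nonneg (fun b _ => by positivity)
    set g : ℕ → ℝ := fun k =>
      (k : ℝ)^k * (32^(σ - k) * (σ - k).factorial / β.factorial) with hgdef
    have hgnn : ∀ k, 0 ≤ g k := by intro k; rw [hgdef]; positivity
    have hfib := sum_fiberwise_of_maps_to hmaps w
    rw [← hfib]
    have hinner : ∀ b ∈ s.powerset,
        ∑ F ∈ (partFinset α (β+1) s).filter (fun F => B0 F = b), w F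
          ≤ if (v₀ ∈ b ∧ 2 ≤ b.card) then g b.card else 0 := by
      intro b hb
      rw [mem_powerset] at hb
      by_cases hval : v₀ ∈ b ∧ 2 ≤ b.card
      · rw [if_pos hval]
        have hbF : ∀ F ∈ (partFinset α (β+1) s).filter (fun F => B0 F = b),
            b ∈ F ∧ IsPart α (β+1) s F := by
          intro F hF
          rw [mem_filter, mem_partFinset] at hF
          obtain ⟨hF1, hF2⟩ := hF
          have := hB0part F hF1
          rw [hF2] at this
          exact ⟨this.1, hF1⟩
        have herasemem : ∀ F ∈ (partFinset α (β+1) s).filter (fun F => B0 F = b),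
            F.erase b ∈ partFinset α β (s \ b) := by
          intro F hF
          obtain ⟨hbmem, hP⟩ := hbF F hF
          rw [mem_partFinset]
          refine ⟨?_, ?_, ?_, ?_⟩
          · rw [Finset.card_erase_of_mem hbmem, hP.1]; omega
          · intro b' hb'
            have hb'F := Finset.mem_of_mem_erase hb'
            have hne' : b' ≠ b := Finset.ne_of_mem_erase hb'
            constructor
            · intro x hx
              rw [mem_sdiff]
              refine ⟨(hP.2.1 b' hb'F).1 hx, ?_⟩
              intro hxb
              exact (Finset.disjoint_left.mp (hP.2.2.2 b' hb'F b hbmem hne')) hx hxb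
            · exact (hP.2.1 b' hb'F).2
          · intro v hv
            rw [mem_sdiff] at hv
            obtain ⟨b'', hb'', hvb''⟩ := hP.2.2.1 v hv.1
            refine ⟨b'', Finset.mem_erase.mpr ⟨?_, hb''⟩, hvb''⟩
            intro heq; rw [heq] at hvb''; exact hv.2 hvb''
          · intro x hx y hy hxy
            exact hP.2.2.2 x (Finset.mem_of_mem_erase hx) y (Finset.mem_of_mem_erase hy) hxy
        have hstep1 : ∑ F ∈ (partFinset α (β+1) s).filter (fun F => B0 F = b), w F
            = ((b.card : ℝ))^b.card * ∑ F ∈ (partFinset α (β+1) s).filter (fun F => B0 F = b),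
                w (F.erase b) := by
          rw [mul_sum]
          apply sum_congr rfl
          intro F hF
          rw [hwdef]
          simp only
          exact (Finset.mul_prod_erase F _ (hbF F hF).1).symm
        have hstep2 : ∑ F ∈ (partFinset α (β+1) s).filter (fun F => B0 F = b), w (F.erase b)
            ≤ ∑ G ∈ partFinset α β (s \ b), w G := by
          have hinj : ∀ F ∈ (partFinset α (β+1) s).filter (fun F => B0 F = b),
              ∀ F' ∈ (partFinset α (β+1) s).filter (fun F => B0 F = b),
              F.erase b = F'.erase b → F = F' := by
            intro F hF F' hF' heq
            rw [← Finset.insert_erase (hbF F hF).1, heq, Finset.insert_erase (hbF F' hF').1]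
          rw [← sum_image hinj]
          apply sum_le_sum_of_subset_of_nonneg
          · intro G hG
            rw [Finset.mem_image] at hG
            obtain ⟨F, hF, rfl⟩ := hG
            exact herasemem F hF
          · intro G _ _; exact hwnn G
        have hstep3 : ∑ G ∈ partFinset α β (s \ b), w G
            ≤ 32^(σ - b.card) * (σ - b.card).factorial / β.factorial := by
          have := ih (s \ b)
          rwa [Finset.card_sdiff_of_subset hb] at this
        rw [hstep1, hgdef]
        simp only
        apply mul_le_mul_of_nonneg_left (le_trans hstep2 hstep3) (by positivity)
      · rw [if_neg hval]
        have hempty : (partFinset α (β+1) s).filter (fun F => B0 F = b) = ∅ := by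
          rw [Finset.filter_eq_empty_iff]
          intro F hF hBF
          rw [mem_partFinset] at hF
          have h1 := hB0part F hF
          rw [hBF] at h1
          exact hval ⟨h1.2, (hF.2.1 b h1.1).2⟩
        rw [hempty, sum_empty]
    have hcard1 : ∀ b ∈ s.powerset.filter (fun b => v₀ ∈ b ∧ 2 ≤ b.card),
        b.card = (b.erase v₀).card + 1 := by
      intro b hb
      rw [mem_filter] at hb
      rw [Finset.card_erase_of_mem hb.2.1]
      omega
    calc ∑ b ∈ s.powerset, ∑ F ∈ (partFinset α (β+1) s).filter (fun F => B0 F = b), w F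
        ≤ ∑ b ∈ s.powerset, (if (v₀ ∈ b ∧ 2 ≤ b.card) then g b.card else 0) :=
          sum_le_sum hinner
      _ = ∑ b ∈ s.powerset.filter (fun b => v₀ ∈ b ∧ 2 ≤ b.card), g b.card :=
          (sum_filter _ _).symm
      _ = ∑ b ∈ s.powerset.filter (fun b => v₀ ∈ b ∧ 2 ≤ b.card), g ((b.erase v₀).card + 1) := by
          apply sum_congr rfl; intro b hb; rw [← hcard1 b hb]
      _ = ∑ c ∈ (s.powerset.filter (fun b => v₀ ∈ b ∧ 2 ≤ b.card)).image (fun b => b.erase v₀),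
            g (c.card + 1) := by
          rw [sum_image]
          intro b hb b' hb' heq
          rw [mem_coe, mem_filter] at hb hb'
          simp only at heq
          rw [← Finset.insert_erase hb.2.1, heq, Finset.insert_erase hb'.2.1]
      _ ≤ ∑ c ∈ (s.erase v₀).powerset, g (c.card + 1) := by
          apply sum_le_sum_of_subset_of_nonneg
          · intro c hc
            rw [Finset.mem_image] at hc
            obtain ⟨b, hb, rfl⟩ := hc
            rw [mem_filter, mem_powerset] at hb
            rw [mem_powerset]
            exact Finset.erase_subset_erase v₀ hb.1
          · intro c _ _; exact hgnn _
      _ = ∑ j ∈ range ((s.erase v₀).card + 1), ∑ c ∈ powersetCard j (s.erase v₀), g (c.card + 1) :=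
          Finset.sum_powerset _ _
      _ = ∑ j ∈ range σ, ((σ-1).choose j : ℝ) * g (j+1) := by
          have hce : (s.erase v₀).card = σ - 1 := by
            rw [Finset.card_erase_of_mem hv₀s]
          rw [hce]
          have hr : σ - 1 + 1 = σ := by omega
          rw [hr]
          apply sum_congr rfl
          intro j _
          have hcc : ∀ c ∈ powersetCard j (s.erase v₀), g (c.card + 1) = g (j+1) := by
            intro c hc
            rw [Finset.mem_powersetCard] at hc
            rw [hc.2]
          rw [sum_congr rfl hcc, sum_const, Finset.card_powersetCard, hce]
          simp [nsmul_eq_mul]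
      _ ≤ 32^σ * σ.factorial / (β+1).factorial := by
          have harith := arith_step σ β h2β
          simp only [hgdef]
          push_cast
          push_cast at harith
          convert harith using 3
    

section GraphLemmas

variable {α r : ℕ} {f : Fin r → Sym2 (Fin α)}

lemma mem_blockOf_self (v : Fin α) : v ∈ blockOf α r f v := by
  rw [blockOf, mem_filter]
  exact ⟨mem_univ v, SimpleGraph.Reachable.refl v⟩

lemma mem_blockOf_iff {v w : Fin α} :
    w ∈ blockOf α r f v ↔ (edgeGraph α r f).Reachable v w := by
  rw [blockOf, mem_filter]
  simp

lemma blockOf_eq_of_mem {v w : Fin α} (h : w ∈ blockOf α r f v) :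
    blockOf α r f w = blockOf α r f v := by
  rw [mem_blockOf_iff] at h
  ext x
  rw [mem_blockOf_iff, mem_blockOf_iff]
  exact ⟨fun hx => h.trans hx, fun hx => h.symm.trans hx⟩

lemma blockOf_mem_blocksOf (v : Fin α) : blockOf α r f v ∈ blocksOf α r f :=
  mem_image.mpr ⟨v, mem_univ v, rfl⟩

lemma blocksOf_mem_iff {b : Finset (Fin α)} :
    b ∈ blocksOf α r f ↔ ∃ v, blockOf α r f v = b := by
  rw [blocksOf, mem_image]
  simp

lemma sym2_exists_rep {V : Type*} (e : Sym2 V) : ∃ x y, e = s(x, y) := by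
  induction e using Sym2.inductionOn with
  | hf x y => exact ⟨x, y, rfl⟩

/-- for a nondiagonal edge, each endpoint has the other as a neighbor -/
lemma adj_of_mem_edge {p : Fin r} {v : Fin α} (hnd : ¬ (f p).IsDiag) (hv : v ∈ f p) :
    ∃ w, (edgeGraph α r f).Adj v w ∧ w ∈ f p := by
  obtain ⟨x, y, hxy⟩ := sym2_exists_rep (f p)
  have hne : x ≠ y := by
    intro h
    apply hnd
    rw [hxy, h]
    exact Sym2.mk_isDiag_iff.mpr rfl
  rw [hxy] at hv
  rcases Sym2.mem_iff.mp hv with h | h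
  · refine ⟨y, ⟨?_, p, ?_⟩, ?_⟩
    · rw [h]; exact hne
    · rw [hxy, h]
    · rw [hxy]; exact Sym2.mem_iff.mpr (Or.inr rfl)
  · refine ⟨x, ⟨?_, p, ?_⟩, ?_⟩
    · rw [h]; exact hne.symm
    · rw [hxy, h, Sym2.eq_swap]
    · rw [hxy]; exact Sym2.mem_iff.mpr (Or.inl rfl)
/-- for a nondiagonal edge, each endpoint has the other as a neighbor -/
lemma two_le_card_blockOf (hnd : ∀ p, ¬ (f p).IsDiag) (hcov : ∀ v, ∃ p, v ∈ f p)
    (v : Fin α) : 2 ≤ (blockOf α r f v).card := by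
  obtain ⟨p, hp⟩ := hcov v
  obtain ⟨w, hadj, _⟩ := adj_of_mem_edge (hnd p) hp
  have hw : w ∈ blockOf α r f v := mem_blockOf_iff.mpr hadj.reachable
  have hv : v ∈ blockOf α r f v := mem_blockOf_self v
  have hne : v ≠ w := (edgeGraph α r f).ne_of_adj hadj
  exact Finset.one_lt_card.mpr ⟨v, hv, w, hw, hne⟩

lemma edge_subset_block (hnd : ∀ p, ¬ (f p).IsDiag) (p : Fin r) :
    ∃ b ∈ blocksOf α r f, ∀ v ∈ f p, v ∈ b := by
  obtain ⟨x, y, hxy⟩ := sym2_exists_rep (f p)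
  refine ⟨blockOf α r f x, blockOf_mem_blocksOf x, ?_⟩
  intro v hv
  rw [hxy] at hv
  rcases Sym2.mem_iff.mp hv with h | h
  · rw [h]; exact mem_blockOf_self x
  · rw [h]
    have hne : x ≠ y := by
      intro hh
      apply hnd p
      rw [hxy, hh]
      exact Sym2.mk_isDiag_iff.mpr rfl
    have hadj : (edgeGraph α r f).Adj x y := ⟨hne, p, hxy⟩
    exact mem_blockOf_iff.mpr hadj.reachable

lemma card_blocksOf_eq (f : Fin r → Sym2 (Fin α)) :
    (blocksOf α r f).card = numCC α r f := by
  set G := edgeGraph α r f with hG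
  set g : G.ConnectedComponent → Finset (Fin α) :=
    fun c => Finset.univ.filter (fun v => G.connectedComponentMk v = c) with hg
  have hkey : ∀ v, g (G.connectedComponentMk v) = blockOf α r f v := by
    intro v
    ext w
    rw [hg]
    simp only [mem_filter, mem_univ, true_and]
    rw [mem_blockOf_iff]
    rw [SimpleGraph.ConnectedComponent.eq]
    exact ⟨fun h => h.symm, fun h => h.symm⟩
  have hgmem : ∀ c v, G.connectedComponentMk v = c → v ∈ g c := by
    intro c v hc
    simp only [hg, mem_filter]
    exact ⟨mem_univ v, hc⟩
  have hmem : ∀ c, g c ∈ blocksOf α r f := by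
    intro c
    obtain ⟨v, hc⟩ := c.exists_rep
    have h2 : g c = blockOf α r f v := by rw [← hc]; exact hkey v
    rw [h2]
    exact blockOf_mem_blocksOf v
  have hinj : Function.Injective (fun c => (⟨g c, hmem c⟩ : {b // b ∈ blocksOf α r f})) := by
    intro c c' hcc
    simp only [Subtype.mk_eq_mk] at hcc
    obtain ⟨v, hc⟩ := c.exists_rep
    have hv : v ∈ g c := hgmem c v hc
    rw [hcc] at hv
    simp only [hg, mem_filter, mem_univ, true_and] at hv
    exact hc.symm.trans hv
  have hsurj : Function.Surjective (fun c => (⟨g c, hmem c⟩ : {b // b ∈ blocksOf α r f})) := by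
    rintro ⟨b, hb⟩
    obtain ⟨v, hv⟩ := blocksOf_mem_iff.mp hb
    refine ⟨G.connectedComponentMk v, Subtype.ext ?_⟩
    simp only
    exact (hkey v).trans hv
  have hequiv : Nat.card G.ConnectedComponent = Nat.card {b // b ∈ blocksOf α r f} :=
    Nat.card_congr (Equiv.ofBijective _ ⟨hinj, hsurj⟩)
  rw [numCC, ← hG, hequiv, Nat.card_eq_fintype_card, Fintype.card_coe]


lemma isPart_blocksOf {β : ℕ} (hf : f ∈ Gfam α β r) :
    IsPart α β Finset.univ (blocksOf α r f) := by
  obtain ⟨hnd, hcov, _heven, hcc⟩ := hf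
  refine ⟨?_, ?_, ?_, ?_⟩
  · rw [card_blocksOf_eq]; exact hcc
  · intro b hb
    obtain ⟨v, hv⟩ := blocksOf_mem_iff.mp hb
    refine ⟨Finset.subset_univ b, ?_⟩
    rw [← hv]
    exact two_le_card_blockOf hnd hcov v
  · intro v _
    exact ⟨blockOf α r f v, blockOf_mem_blocksOf v, mem_blockOf_self v⟩
  · intro b hb b' hb' hne
    obtain ⟨v, hv⟩ := blocksOf_mem_iff.mp hb
    obtain ⟨v', hv'⟩ := blocksOf_mem_iff.mp hb'
    rw [Finset.disjoint_left]
    intro x hxb hxb'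
    apply hne
    rw [← hv, ← hv']
    rw [← hv] at hxb
    rw [← hv'] at hxb'
    rw [← blockOf_eq_of_mem hxb, ← blockOf_eq_of_mem hxb']

lemma edge_eq_of_two_mem {e : Sym2 (Fin α)} {v w : Fin α} (hne : w ≠ v)
    (hw : w ∈ e) (hv : v ∈ e) : e = s(w, v) := by
  obtain ⟨x, y, rfl⟩ := sym2_exists_rep e
  rcases Sym2.mem_iff.mp hw with h1 | h1 <;> rcases Sym2.mem_iff.mp hv with h2 | h2 <;>
    subst h1 <;> subst h2
  · exact absurd rfl hne
  · rfl
  · exact Sym2.eq_swap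
  · exact absurd rfl hne

lemma card_le_card_labelsIn {β : ℕ} (hf : f ∈ Gfam α β r) {b : Finset (Fin α)}
    (hb : b ∈ blocksOf α r f) : b.card ≤ (labelsIn α r f b).card := by
  obtain ⟨hnd, hcov, heven, _⟩ := hf
  have hkey : ∀ p : Fin r, (b.filter (· ∈ f p)).card
      = if p ∈ labelsIn α r f b then 2 else 0 := by
    intro p
    obtain ⟨x, y, hxy⟩ := sym2_exists_rep (f p)
    have hne : x ≠ y := by
      intro h
      exact hnd p (by rw [hxy, h]; exact Sym2.mk_isDiag_iff.mpr rfl)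
    by_cases hp : p ∈ labelsIn α r f b
    · rw [if_pos hp]
      rw [labelsIn, mem_filter] at hp
      have hxb : x ∈ b := hp.2 x (by rw [hxy]; exact Sym2.mem_iff.mpr (Or.inl rfl))
      have hyb : y ∈ b := hp.2 y (by rw [hxy]; exact Sym2.mem_iff.mpr (Or.inr rfl))
      have : b.filter (· ∈ f p) = {x, y} := by
        ext w
        rw [mem_filter, Finset.mem_insert, Finset.mem_singleton]
        constructor
        · rintro ⟨_, hw⟩
          rw [hxy] at hw
          exact Sym2.mem_iff.mp hw
        · rintro (rfl | rfl)
          · exact ⟨hxb, by rw [hxy]; exact Sym2.mem_iff.mpr (Or.inl rfl)⟩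
          · exact ⟨hyb, by rw [hxy]; exact Sym2.mem_iff.mpr (Or.inr rfl)⟩
      rw [this, Finset.card_pair hne]
    · rw [if_neg hp]
      rw [Finset.card_eq_zero, Finset.filter_eq_empty_iff]
      intro w hwb hwp
      apply hp
      rw [labelsIn, mem_filter]
      refine ⟨mem_univ p, ?_⟩
      intro v hv
      by_cases hvw : v = w
      · rw [hvw]; exact hwb
      · have hedge : f p = s(w, v) := edge_eq_of_two_mem (Ne.symm hvw) hwp hv
        have hadj : (edgeGraph α r f).Adj w v := by
          refine ⟨?_, p, hedge⟩
          intro h; exact hvw (h.symm)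
        obtain ⟨u, hu⟩ := blocksOf_mem_iff.mp hb
        rw [← hu] at hwb ⊢
        rw [← blockOf_eq_of_mem hwb]
        exact mem_blockOf_iff.mpr hadj.reachable
  have hsum1 : ∑ v ∈ b, edgeDeg α r f v = 2 * (labelsIn α r f b).card := by
    have h1 : ∀ v, edgeDeg α r f v = ∑ p ∈ (univ : Finset (Fin r)), if v ∈ f p then 1 else 0 := by
      intro v; rw [edgeDeg, Finset.card_filter]
    calc ∑ v ∈ b, edgeDeg α r f v
        = ∑ v ∈ b, ∑ p ∈ (univ : Finset (Fin r)), (if v ∈ f p then 1 else 0) := by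
          apply sum_congr rfl; intro v _; exact h1 v
      _ = ∑ p ∈ (univ : Finset (Fin r)), ∑ v ∈ b, (if v ∈ f p then 1 else 0) := sum_comm
      _ = ∑ p ∈ (univ : Finset (Fin r)), (b.filter (· ∈ f p)).card := by
          apply sum_congr rfl; intro p _; rw [Finset.card_filter]
      _ = ∑ p ∈ (univ : Finset (Fin r)), (if p ∈ labelsIn α r f b then 2 else 0) := by
          apply sum_congr rfl; intro p _; exact hkey p
      _ = ∑ p ∈ univ.filter (· ∈ labelsIn α r f b), 2 := (sum_filter _ _).symm
      _ = 2 * (labelsIn α r f b).card := by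
          rw [sum_const, Finset.filter_univ_mem]
          ring
  have hdeg2 : ∀ v ∈ b, 2 ≤ edgeDeg α r f v := by
    intro v _
    obtain ⟨p, hp⟩ := hcov v
    have hpos : 0 < edgeDeg α r f v := by
      rw [edgeDeg, Finset.card_pos]
      exact ⟨p, mem_filter.mpr ⟨mem_univ p, hp⟩⟩
    obtain ⟨k, hk⟩ := heven v
    omega
  have : 2 * b.card ≤ ∑ v ∈ b, edgeDeg α r f v := by
    calc 2 * b.card = ∑ _v ∈ b, 2 := by rw [sum_const]; ring
      _ ≤ ∑ v ∈ b, edgeDeg α r f v := sum_le_sum hdeg2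
  omega


end GraphLemmas

section Counting
variable {α r β : ℕ}

lemma sum_card_of_isPart {F : Finset (Finset (Fin α))}
    (hF : IsPart α β Finset.univ F) : ∑ b ∈ F, b.card = α := by
  have hdisj : ∀ x ∈ F, ∀ y ∈ F, x ≠ y → Disjoint (id x) (id y) := by
    intro x hx y hy hxy; exact hF.2.2.2 x hx y hy hxy
  have hbu : F.biUnion id = Finset.univ := by
    apply Finset.eq_univ_of_forall
    intro v
    rw [mem_biUnion]
    obtain ⟨b, hb, hvb⟩ := hF.2.2.1 v (mem_univ v)
    exact ⟨b, hb, hvb⟩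
  calc ∑ b ∈ F, b.card = (F.biUnion id).card := (Finset.card_biUnion hdisj).symm
    _ = α := by rw [hbu, Finset.card_univ, Fintype.card_fin]

lemma sum_card_sq_le (hβ : 1 ≤ β) (h2β : 2*β ≤ α) {F : Finset (Finset (Fin α))}
    (hF : IsPart α β Finset.univ F) :
    ∑ b ∈ F, b.card * b.card ≤ (α - 2*β)*(α - 2*β) + 4*(α - β) := by
  have hsum : ∑ b ∈ F, b.card = α := sum_card_of_isPart hF
  have hub : ∀ b ∈ F, b.card ≤ α - 2*β + 2 := by
    intro b hb
    have h1 : b.card + ∑ b' ∈ F.erase b, b'.card = α := by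
      have h := Finset.add_sum_erase F (fun b => Finset.card b) hb
      rw [hsum] at h
      exact h
    have h2 : 2*(β - 1) ≤ ∑ b' ∈ F.erase b, b'.card := by
      calc 2*(β-1) = ∑ _b' ∈ F.erase b, 2 := by
            rw [sum_const, Finset.card_erase_of_mem hb, hF.1]; ring
        _ ≤ ∑ b' ∈ F.erase b, b'.card :=
            sum_le_sum (fun b' hb' => (hF.2.1 b' (Finset.mem_of_mem_erase hb')).2)
    omega
  have hperblock : ∀ b ∈ F, b.card * b.card ≤ (b.card - 2)*(α - 2*β + 4) + 4 := by
    intro b hb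
    have h2 : 2 ≤ b.card := (hF.2.1 b hb).2
    obtain ⟨m, hm⟩ : ∃ m, b.card = m + 2 := ⟨b.card - 2, by omega⟩
    have hK : m + 4 ≤ α - 2*β + 4 := by
      have := hub b hb; omega
    rw [hm]
    have hmm : m + 2 - 2 = m := by omega
    rw [hmm]
    have hstep : m*(m+4) ≤ m*(α - 2*β + 4) := Nat.mul_le_mul_left m hK
    calc (m+2)*(m+2) = m*(m+4) + 4 := by ring
      _ ≤ m*(α - 2*β + 4) + 4 := Nat.add_le_add_right hstep 4
  have hsub : ∑ b ∈ F, (b.card - 2) = α - 2*β := by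
    have h1 : ∑ b ∈ F, ((b.card - 2) + 2) = α := by
      have h0 : ∑ b ∈ F, ((b.card - 2) + 2) = ∑ b ∈ F, b.card := by
        apply sum_congr rfl
        intro b hb
        have := (hF.2.1 b hb).2
        omega
      rw [h0, hsum]
    rw [Finset.sum_add_distrib] at h1
    rw [sum_const, hF.1, smul_eq_mul] at h1
    omega
  calc ∑ b ∈ F, b.card * b.card
      ≤ ∑ b ∈ F, ((b.card - 2)*(α - 2*β + 4) + 4) := sum_le_sum hperblock
    _ = (∑ b ∈ F, (b.card - 2))*(α - 2*β + 4) + 4*β := by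
        rw [Finset.sum_add_distrib, ← Finset.sum_mul]
        rw [sum_const, hF.1, smul_eq_mul]
        ring
    _ = (α - 2*β)*(α - 2*β + 4) + 4*β := by rw [hsub]
    _ = (α - 2*β)*(α - 2*β) + 4*(α - β) := by
        obtain ⟨a, ha⟩ : ∃ a, α - 2*β = a := ⟨α - 2*β, rfl⟩
        have h1 : α - β = a + β := by omega
        rw [ha, h1]
        ring

set_option maxHeartbeats 1000000 in
lemma chernoff (M : ℕ) (hM : 0 < M) (hα : 0 < α)
    (F : Finset (Finset (Fin α))) (hF : IsPart α β Finset.univ F)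
    (hsq : ∑ b ∈ F, b.card * b.card ≤ M)
    (G : Finset (Fin r → Sym2 (Fin α)))
    (hG : ∀ f ∈ G, (∀ p, ∃ b ∈ F, ∀ v ∈ f p, v ∈ b) ∧
          (∀ b ∈ F, b.card ≤ (labelsIn α r f b).card)) :
    (G.card : ℝ) * (M:ℝ)^α ≤ (2*M)^r * ∏ b ∈ F, ((α:ℝ) * b.card)^b.card := by
  have hsumcard : ∑ b ∈ F, b.card = α := sum_card_of_isPart hF
  have hcard_pos : ∀ b ∈ F, 0 < b.card := fun b hb => by
    have := (hF.2.1 b hb).2; omega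
  set z : Finset (Fin α) → ℝ := fun b => max 1 ((M:ℝ)/(α * b.card)) with hz
  have hz1 : ∀ b, 1 ≤ z b := fun b => le_max_left _ _
  have hz0 : ∀ b, 0 < z b := fun b => lt_of_lt_of_le one_pos (hz1 b)
  have hzM : ∀ b, (M:ℝ)/(α*b.card) ≤ z b := fun b => le_max_right _ _
  have hzub : ∀ b, z b ≤ 1 + (M:ℝ)/(α*b.card) := by
    intro b
    apply max_le
    · apply le_add_of_nonneg_right; positivity
    · apply le_add_of_nonneg_left; norm_num
  set bOf : Sym2 (Fin α) → Finset (Fin α) :=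
    fun e => if h : ∃ b ∈ F, ∀ v ∈ e, v ∈ b then h.choose else ∅ with hbOf
  have hbOf1 : ∀ e, (∃ b ∈ F, ∀ v ∈ e, v ∈ b) → bOf e ∈ F ∧ ∀ v ∈ e, v ∈ bOf e := by
    intro e h
    rw [hbOf]
    simp only [dif_pos h]
    exact ⟨h.choose_spec.1, h.choose_spec.2⟩
  have huniq : ∀ e, ∀ b ∈ F, (∀ v ∈ e, v ∈ b) → bOf e = b := by
    intro e b hb hcont
    obtain ⟨h1, h2⟩ := hbOf1 e ⟨b, hb, hcont⟩
    by_contra hne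
    obtain ⟨x, y, rfl⟩ := sym2_exists_rep e
    have hx1 : x ∈ bOf s(x,y) := h2 x (Sym2.mem_iff.mpr (Or.inl rfl))
    have hx2 : x ∈ b := hcont x (Sym2.mem_iff.mpr (Or.inl rfl))
    exact (Finset.disjoint_left.mp (hF.2.2.2 _ h1 b hb hne)) hx1 hx2
  set W : Finset (Sym2 (Fin α)) := F.biUnion (pairsIn α) with hW
  have hmemW : ∀ b ∈ F, ∀ e : Sym2 (Fin α), (∀ v ∈ e, v ∈ b) → e ∈ pairsIn α b := by
    intro b hb e he
    obtain ⟨x, y, rfl⟩ := sym2_exists_rep e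
    rw [pairsIn, Finset.mem_image]
    refine ⟨(x, y), ?_, rfl⟩
    rw [Finset.mem_product]
    exact ⟨he x (Sym2.mem_iff.mpr (Or.inl rfl)), he y (Sym2.mem_iff.mpr (Or.inr rfl))⟩
  have hWcont : ∀ e ∈ W, ∃ b ∈ F, ∀ v ∈ e, v ∈ b := by
    intro e he
    rw [hW, mem_biUnion] at he
    obtain ⟨b, hb, heb⟩ := he
    rw [pairsIn, Finset.mem_image] at heb
    obtain ⟨q, hq, rfl⟩ := heb
    rw [Finset.mem_product] at hq
    refine ⟨b, hb, ?_⟩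
    intro v hv
    rcases Sym2.mem_iff.mp hv with h | h
    · rw [h]; exact hq.1
    · rw [h]; exact hq.2
  have hLab : ∀ f ∈ G, ∀ b ∈ F,
      labelsIn α r f b = Finset.univ.filter (fun p => bOf (f p) = b) := by
    intro f hf b hb
    ext p
    rw [labelsIn, mem_filter, mem_filter]
    constructor
    · rintro ⟨hp, hcont⟩
      exact ⟨hp, huniq (f p) b hb hcont⟩
    · rintro ⟨hp, heq⟩
      refine ⟨hp, ?_⟩
      rw [← heq]
      exact (hbOf1 (f p) ((hG f hf).1 p)).2
  have hstep : ∀ f ∈ G, ∏ b ∈ F, z b ^ b.card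
      ≤ ∏ p ∈ (Finset.univ : Finset (Fin r)), z (bOf (f p)) := by
    intro f hf
    have hmaps : ∀ p ∈ (Finset.univ : Finset (Fin r)), bOf (f p) ∈ F :=
      fun p _ => (hbOf1 (f p) ((hG f hf).1 p)).1
    have h1 : ∏ p ∈ (Finset.univ : Finset (Fin r)), z (bOf (f p))
        = ∏ b ∈ F, z b ^ (labelsIn α r f b).card := by
      rw [← prod_fiberwise_of_maps_to hmaps (fun p => z (bOf (f p)))]
      apply prod_congr rfl
      intro b hb
      rw [hLab f hf b hb]
      calc ∏ p ∈ Finset.univ.filter (fun p => bOf (f p) = b), z (bOf (f p))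
          = ∏ p ∈ Finset.univ.filter (fun p => bOf (f p) = b), z b := by
            apply prod_congr rfl
            intro p hp
            rw [(mem_filter.mp hp).2]
        _ = z b ^ (Finset.univ.filter (fun p => bOf (f p) = b)).card := prod_const _
    rw [h1]
    apply prod_le_prod
    · intro b _; positivity
    · intro b hb
      exact pow_le_pow_right₀ (hz1 b) ((hG f hf).2 b hb)
  have hWsum : ∑ e ∈ W, z (bOf e) ≤ 2*M := by
    have hmaps : ∀ e ∈ W, bOf e ∈ F := fun e he => (hbOf1 e (hWcont e he)).1
    rw [← sum_fiberwise_of_maps_to hmaps (fun e => z (bOf e))]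
    have hinner : ∀ b ∈ F, ∑ e ∈ W.filter (fun e => bOf e = b), z (bOf e)
        ≤ (b.card : ℝ)*(b.card : ℝ) * z b := by
      intro b hb
      have h1 : ∑ e ∈ W.filter (fun e => bOf e = b), z (bOf e)
          = ∑ _e ∈ W.filter (fun e => bOf e = b), z b := by
        apply sum_congr rfl
        intro e he
        rw [(mem_filter.mp he).2]
      rw [h1, sum_const, nsmul_eq_mul]
      apply mul_le_mul_of_nonneg_right _ (hz0 b).le
      have hsub : W.filter (fun e => bOf e = b) ⊆ pairsIn α b := by
        intro e he
        rw [mem_filter] at he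
        apply hmemW b hb
        intro v hv
        rw [← he.2]
        exact (hbOf1 e (hWcont e he.1)).2 v hv
      have hcardp : (pairsIn α b).card ≤ b.card * b.card := by
        calc (pairsIn α b).card ≤ (b ×ˢ b).card := Finset.card_image_le
          _ = b.card * b.card := Finset.card_product b b
      have := le_trans (Finset.card_le_card hsub) hcardp
      exact_mod_cast this
    calc ∑ b ∈ F, ∑ e ∈ W.filter (fun e => bOf e = b), z (bOf e)
        ≤ ∑ b ∈ F, (b.card : ℝ)*(b.card : ℝ) * z b := sum_le_sum hinner
      _ ≤ ∑ b ∈ F, ((b.card : ℝ)*(b.card : ℝ) + (M:ℝ)/α * b.card) := by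
          apply sum_le_sum
          intro b hb
          have hbc : (0:ℝ) < b.card := by exact_mod_cast hcard_pos b hb
          have h2 : (b.card : ℝ)*(b.card : ℝ) * ((M:ℝ)/(α*b.card)) = (M:ℝ)/α * b.card := by
            field_simp
          calc (b.card : ℝ)*(b.card : ℝ) * z b
              ≤ (b.card : ℝ)*(b.card : ℝ) * (1 + (M:ℝ)/(α*b.card)) := by
                apply mul_le_mul_of_nonneg_left (hzub b) (by positivity)
            _ = (b.card : ℝ)*(b.card : ℝ) + (b.card : ℝ)*(b.card : ℝ) * ((M:ℝ)/(α*b.card)) := by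
                ring
            _ = (b.card : ℝ)*(b.card : ℝ) + (M:ℝ)/α * b.card := by rw [h2]
      _ = (∑ b ∈ F, (b.card : ℝ)*(b.card : ℝ)) + (M:ℝ)/α * (∑ b ∈ F, (b.card:ℝ)) := by
          rw [Finset.sum_add_distrib, ← mul_sum]
      _ ≤ (M:ℝ) + (M:ℝ)/α * (∑ b ∈ F, (b.card:ℝ)) := by
          apply add_le_add_left
          have : ((∑ b ∈ F, b.card * b.card : ℕ) : ℝ) ≤ (M:ℝ) := by exact_mod_cast hsq
          calc ∑ b ∈ F, (b.card : ℝ)*(b.card : ℝ)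
              = ((∑ b ∈ F, b.card * b.card : ℕ) : ℝ) := by push_cast; rfl
            _ ≤ (M:ℝ) := this
      _ = (M:ℝ) + (M:ℝ)/α * α := by
          congr 1
          congr 1
          calc ∑ b ∈ F, (b.card:ℝ) = ((∑ b ∈ F, b.card : ℕ):ℝ) := by push_cast; rfl
            _ = (α:ℝ) := by rw [hsumcard]
      _ = 2*M := by
          have hα' : (α:ℝ) ≠ 0 := by positivity
          field_simp
          ring
  have hG_sub : G ⊆ Fintype.piFinset (fun _ : Fin r => W) := by
    intro f hf
    rw [Fintype.mem_piFinset]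
    intro p
    obtain ⟨b, hb, hcont⟩ := (hG f hf).1 p
    rw [hW, mem_biUnion]
    exact ⟨b, hb, hmemW b hb _ hcont⟩
  have hmain : (G.card : ℝ) * ∏ b ∈ F, z b ^ b.card ≤ ((2:ℝ)*M)^r := by
    calc (G.card : ℝ) * ∏ b ∈ F, z b ^ b.card
        = ∑ _f ∈ G, ∏ b ∈ F, z b ^ b.card := by rw [sum_const, nsmul_eq_mul]
      _ ≤ ∑ f ∈ G, ∏ p ∈ (Finset.univ : Finset (Fin r)), z (bOf (f p)) := sum_le_sum hstep
      _ ≤ ∑ f ∈ Fintype.piFinset (fun _ : Fin r => W),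
            ∏ p ∈ (Finset.univ : Finset (Fin r)), z (bOf (f p)) := by
          apply sum_le_sum_of_subset_of_nonneg hG_sub
          intro f _ _
          exact prod_nonneg (fun p _ => (hz0 _).le)
      _ = ∏ _p : Fin r, ∑ e ∈ W, z (bOf e) :=
          (Finset.prod_univ_sum (fun _ : Fin r => W) (fun _ e => z (bOf e))).symm
      _ = (∑ e ∈ W, z (bOf e))^r := by rw [prod_const, card_univ, Fintype.card_fin]
      _ ≤ ((2:ℝ)*M)^r := by
          apply pow_le_pow_left₀ _ hWsum
          apply sum_nonneg
          intro e _
          exact (hz0 _).le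
  have hXpos : (0:ℝ) < ∏ b ∈ F, ((α:ℝ) * b.card)^b.card := by
    apply prod_pos
    intro b hb
    have : (0:ℝ) < b.card := by exact_mod_cast hcard_pos b hb
    positivity
  have hlow : (M:ℝ)^α / ∏ b ∈ F, ((α:ℝ) * b.card)^b.card ≤ ∏ b ∈ F, z b ^ b.card := by
    have h1 : ∏ b ∈ F, ((M:ℝ)/(α*b.card))^b.card ≤ ∏ b ∈ F, z b ^ b.card := by
      apply prod_le_prod
      · intro b hb; positivity
      · intro b hb
        exact pow_le_pow_left₀ (by positivity) (hzM b) _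
    have h2 : ∏ b ∈ F, ((M:ℝ)/(α*b.card))^b.card
        = (M:ℝ)^α / ∏ b ∈ F, ((α:ℝ) * b.card)^b.card := by
      calc ∏ b ∈ F, ((M:ℝ)/(α*b.card))^b.card
          = ∏ b ∈ F, ((M:ℝ)^b.card / ((α:ℝ)*b.card)^b.card) := by
            apply prod_congr rfl; intro b _; rw [div_pow]
        _ = (∏ b ∈ F, (M:ℝ)^b.card) / (∏ b ∈ F, ((α:ℝ)*b.card)^b.card) :=
            Finset.prod_div_distrib _ _
        _ = (M:ℝ)^α / ∏ b ∈ F, ((α:ℝ) * b.card)^b.card := by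
            rw [Finset.prod_pow_eq_pow_sum, hsumcard]
    rw [← h2]
    exact h1
  have h3 : (G.card:ℝ) * ((M:ℝ)^α / ∏ b ∈ F, ((α:ℝ) * b.card)^b.card) ≤ ((2:ℝ)*M)^r :=
    le_trans (mul_le_mul_of_nonneg_left hlow (Nat.cast_nonneg _)) hmain
  have h4 : (G.card:ℝ) * ((M:ℝ)^α / ∏ b ∈ F, ((α:ℝ) * b.card)^b.card)
      = (G.card:ℝ) * (M:ℝ)^α / ∏ b ∈ F, ((α:ℝ) * b.card)^b.card := by ring
  rw [h4, div_le_iff₀ hXpos] at h3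
  exact h3

end Counting


set_option maxHeartbeats 1000000 in
theorem Gfam_card_upper :
    ∃ C : ℝ, 0 < C ∧ ∀ r α β : ℕ, 1 ≤ β → 2*β ≤ α → α ≤ r →
      ((Gfam α β r).ncard : ℝ) ≤ (2:ℝ)^(C * r) * Delta α β r := by
  refine ⟨8, by norm_num, ?_⟩
  intro r α β hβ h2β hαr
  have hα2 : 2 ≤ α := by omega
  have hβα : β ≤ α := by omega
  have hβr : β ≤ r := by omega
  have hαpos : 0 < α := by omega
  set M : ℕ := (α - 2*β)*(α - 2*β) + 4*(α - β) with hMdef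
  have hM : 0 < M := by
    have : 1 ≤ α - β := by omega
    have : 4 ≤ 4*(α-β) := by omega
    omega
  set N : Finset (Fin r → Sym2 (Fin α)) := (Gfam α β r).toFinset with hN
  have hncard : (Gfam α β r).ncard = N.card := Set.ncard_eq_toFinset_card' _
  have hmaps : ∀ f ∈ N, blocksOf α r f ∈ N.image (blocksOf α r) :=
    fun f hf => mem_image_of_mem _ hf
  have hcards := Finset.card_eq_sum_card_fiberwise hmaps
  -- the per-fiber bound
  have hperF : ∀ F ∈ N.image (blocksOf α r),
      ((N.filter (fun f => blocksOf α r f = F)).card : ℝ)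
        ≤ 2^r * (M:ℝ)^(r-α) * (α:ℝ)^α * ∏ b ∈ F, (b.card:ℝ)^b.card := by
    intro F hFmem
    obtain ⟨f₀, hf₀, hFeq⟩ := mem_image.mp hFmem
    have hf₀G : f₀ ∈ Gfam α β r := Set.mem_toFinset.mp hf₀
    have hIsPart : IsPart α β Finset.univ F := by
      rw [← hFeq]; exact isPart_blocksOf hf₀G
    have hsq : ∑ b ∈ F, b.card * b.card ≤ M := sum_card_sq_le hβ h2β hIsPart
    have hhyp : ∀ f ∈ N.filter (fun f => blocksOf α r f = F),
        (∀ p, ∃ b ∈ F, ∀ v ∈ f p, v ∈ b) ∧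
        (∀ b ∈ F, b.card ≤ (labelsIn α r f b).card) := by
      intro f hf
      rw [mem_filter] at hf
      have hfG : f ∈ Gfam α β r := Set.mem_toFinset.mp hf.1
      constructor
      · intro p
        rw [← hf.2]
        exact edge_subset_block hfG.1 p
      · intro b hb
        rw [← hf.2] at hb
        exact card_le_card_labelsIn hfG hb
    have hchern := chernoff M hM hαpos F hIsPart hsq
      (N.filter (fun f => blocksOf α r f = F)) hhyp
    have hMα : (0:ℝ) < (M:ℝ)^α := by positivity
    rw [← mul_le_mul_iff_of_pos_right hMα]
    have hprod : ∏ b ∈ F, ((α:ℝ)*b.card)^b.card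
        = (α:ℝ)^α * ∏ b ∈ F, (b.card:ℝ)^b.card := by
      calc ∏ b ∈ F, ((α:ℝ)*b.card)^b.card
          = ∏ b ∈ F, ((α:ℝ)^b.card * (b.card:ℝ)^b.card) := by
            apply prod_congr rfl; intro b _; rw [mul_pow]
        _ = (∏ b ∈ F, (α:ℝ)^b.card) * ∏ b ∈ F, (b.card:ℝ)^b.card := prod_mul_distrib
        _ = (α:ℝ)^α * ∏ b ∈ F, (b.card:ℝ)^b.card := by
            rw [Finset.prod_pow_eq_pow_sum, sum_card_of_isPart hIsPart]
    have h2M : ((2:ℝ)*M)^r = 2^r * (M:ℝ)^(r-α) * (M:ℝ)^α := by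
      rw [mul_pow]
      have : (M:ℝ)^r = (M:ℝ)^(r-α) * (M:ℝ)^α := by
        rw [← pow_add]
        congr 1
        omega
      rw [this]
      ring
    calc ((N.filter (fun f => blocksOf α r f = F)).card : ℝ) * (M:ℝ)^α
        ≤ ((2:ℝ)*M)^r * ∏ b ∈ F, ((α:ℝ)*b.card)^b.card := hchern
      _ = 2^r * (M:ℝ)^(r-α) * (α:ℝ)^α * (∏ b ∈ F, (b.card:ℝ)^b.card) * (M:ℝ)^α := by
          rw [h2M, hprod]; ring
  -- sum up
  have himage : N.image (blocksOf α r) ⊆ partFinset α β Finset.univ := by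
    intro F hF
    obtain ⟨f₀, hf₀, hFeq⟩ := mem_image.mp hF
    rw [mem_partFinset, ← hFeq]
    exact isPart_blocksOf (Set.mem_toFinset.mp hf₀)
  have hsum1 : ∑ F ∈ N.image (blocksOf α r), ∏ b ∈ F, (b.card:ℝ)^b.card
      ≤ 32^α * (Nat.factorial α) / (Nat.factorial β) := by
    calc ∑ F ∈ N.image (blocksOf α r), ∏ b ∈ F, (b.card:ℝ)^b.card
        ≤ ∑ F ∈ partFinset α β Finset.univ, ∏ b ∈ F, (b.card:ℝ)^b.card := by
          apply sum_le_sum_of_subset_of_nonneg himage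
          intro F _ _
          exact prod_nonneg (fun b _ => by positivity)
      _ ≤ 32^(Finset.univ : Finset (Fin α)).card
            * (Nat.factorial (Finset.univ : Finset (Fin α)).card) / (Nat.factorial β) :=
          master α β Finset.univ
      _ = 32^α * (Nat.factorial α) / (Nat.factorial β) := by
          rw [Finset.card_univ, Fintype.card_fin]
  have hfacα : ((Nat.factorial α : ℕ) : ℝ) ≤ (α:ℝ)^α := by
    exact_mod_cast Nat.factorial_le_pow α
  have hβfacpos : (0:ℝ) < (Nat.factorial β : ℝ) := by exact_mod_cast β.factorial_pos
  have hβpow : (0:ℝ) < (β:ℝ)^β := by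
    have : (0:ℝ) < β := by exact_mod_cast hβ
    positivity
  have hfacβ : (1:ℝ) / (Nat.factorial β) ≤ 4^β / (β:ℝ)^β := by
    rw [div_le_div_iff₀ hβfacpos hβpow]
    have := pow_self_le_four_pow_mul_factorial β
    linarith
  have hsum2 : (32:ℝ)^α * (Nat.factorial α) / (Nat.factorial β)
      ≤ 32^α * ((α:ℝ)^α * (4^β / (β:ℝ)^β)) := by
    have h1 : (32:ℝ)^α * (Nat.factorial α) / (Nat.factorial β)
        = 32^α * ((Nat.factorial α : ℝ) * (1 / (Nat.factorial β))) := by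
      field_simp
    rw [h1]
    apply mul_le_mul_of_nonneg_left _ (by positivity : (0:ℝ) ≤ 32^α)
    apply mul_le_mul hfacα hfacβ (by positivity) (by positivity)
  -- put everything together
  have hmain : (N.card : ℝ)
      ≤ 2^r * (M:ℝ)^(r-α) * (α:ℝ)^α * (32^α * ((α:ℝ)^α * (4^β / (β:ℝ)^β))) := by
    calc (N.card : ℝ)
        = ∑ F ∈ N.image (blocksOf α r),
            ((N.filter (fun f => blocksOf α r f = F)).card : ℝ) := by
          rw [hcards]; push_cast; rfl
      _ ≤ ∑ F ∈ N.image (blocksOf α r),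
            2^r * (M:ℝ)^(r-α) * (α:ℝ)^α * ∏ b ∈ F, (b.card:ℝ)^b.card :=
          sum_le_sum hperF
      _ = 2^r * (M:ℝ)^(r-α) * (α:ℝ)^α
            * ∑ F ∈ N.image (blocksOf α r), ∏ b ∈ F, (b.card:ℝ)^b.card := by
          rw [← mul_sum]
      _ ≤ 2^r * (M:ℝ)^(r-α) * (α:ℝ)^α * (32^α * (Nat.factorial α) / (Nat.factorial β)) := by
          apply mul_le_mul_of_nonneg_left hsum1 (by positivity)
      _ ≤ 2^r * (M:ℝ)^(r-α) * (α:ℝ)^α * (32^α * ((α:ℝ)^α * (4^β / (β:ℝ)^β))) := by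
          apply mul_le_mul_of_nonneg_left hsum2 (by positivity)
  -- numeric simplification
  have hpows : (2:ℝ)^r * 32^α * 4^β ≤ 2^(8*r) := by
    have h32 : (32:ℝ)^α ≤ 32^r := pow_le_pow_right₀ (by norm_num) hαr
    have h4 : (4:ℝ)^β ≤ 4^r := pow_le_pow_right₀ (by norm_num) hβr
    calc (2:ℝ)^r * 32^α * 4^β ≤ 2^r * 32^r * 4^r := by
          apply mul_le_mul _ h4 (by positivity) (by positivity)
          apply mul_le_mul_of_nonneg_left h32 (by positivity)
      _ = 256^r := by rw [← mul_pow, ← mul_pow]; norm_num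
      _ = 2^(8*r) := by rw [pow_mul]; norm_num
  have hMcast : ((M:ℕ):ℝ) = ((α:ℝ) - 2*β)^2 + 4*((α:ℝ) - β) := by
    rw [hMdef]
    push_cast [Nat.cast_sub h2β, Nat.cast_sub hβα]
    ring
  have hrpow : (2:ℝ)^((8:ℝ) * r) = (2:ℝ)^(8*r : ℕ) := by
    rw [show ((8:ℝ) * r) = ((8*r : ℕ) : ℝ) by push_cast; ring]
    exact Real.rpow_natCast 2 (8*r)
  rw [hncard, hrpow, Delta]
  have hα2α : (α:ℝ)^(2*α) = (α:ℝ)^α * (α:ℝ)^α := by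
    rw [two_mul, pow_add]
  calc (N.card : ℝ)
      ≤ 2^r * (M:ℝ)^(r-α) * (α:ℝ)^α * (32^α * ((α:ℝ)^α * (4^β / (β:ℝ)^β))) := hmain
    _ = (2^r * 32^α * 4^β) * (((α:ℝ)^α * (α:ℝ)^α) / (β:ℝ)^β) * (M:ℝ)^(r-α) := by
        field_simp
    _ ≤ (2:ℝ)^(8*r) * (((α:ℝ)^α * (α:ℝ)^α) / (β:ℝ)^β) * (M:ℝ)^(r-α) := by
        apply mul_le_mul_of_nonneg_right _ (by positivity)
        apply mul_le_mul_of_nonneg_right hpows (by positivity)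
    _ = (2:ℝ)^(8*r) * ((α:ℝ)^(2*α) / (β:ℝ)^β * (((α:ℝ) - 2*β)^2 + 4*((α:ℝ) - β))^(r - α)) := by
        rw [hα2α, ← hMcast]
        ring

end FHGraph
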